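/- Let ρ be a density matrix (positive semidefinite complex matrix with trace 1) on a finite index type D, let m ≥ 1 and σ ∈ Perm (Fin m), and let W_σ be the permutation operator on (Fin m → D) with entries W_σ(x,y) = 1 if x = y ∘ σ and 0 otherwise. Then |trace(W_σ * ρ^{⊗m})| ≤ 1. -/

import Mathlib

open Matrix ComplexOrder

/-- The `m`-fold tensor power of a square matrix, as a matrix on `Fin m → D`. -/
noncomputable def tensorPow {D : Type*} [Fintype D] (A : Matrix D D ℂ) (m : ℕ) :
    Matrix (Fin m → D) (Fin m → D) ℂ :=
  Matrix.of fun x y => ∏ t, A (x t) (y t)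

/-- The permutation operator `W_σ` on `m` copies: `W_σ(x,y) = 1` if `x = y ∘ σ`, else `0`. -/
noncomputable def permOp {D : Type*} [DecidableEq D] {m : ℕ} (σ : Equiv.Perm (Fin m)) :
    Matrix (Fin m → D) (Fin m → D) ℂ :=
  Matrix.of fun x y => if x = y ∘ σ then 1 else 0


lemma diag_nonneg {D : Type*} [Fintype D] [DecidableEq D] {ρ : Matrix D D ℂ}
    (hρ : ρ.PosSemidef) (a : D) : 0 ≤ (ρ a a).re := by
  have h := hρ.re_dotProduct_nonneg (Pi.single a 1)
  simpa [dotProduct, mulVec, Pi.single_apply, Finset.sum_ite_eq] using h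

lemma entry_bound {D : Type*} [Fintype D] [DecidableEq D] {ρ : Matrix D D ℂ}
    (hρ : ρ.PosSemidef) (a b : D) :
    ‖ρ a b‖ ≤ Real.sqrt ((ρ a a).re * (ρ b b).re) := by
  have hd := diag_nonneg hρ
  have herm : ∀ c e : D, (starRingEnd ℂ) (ρ c e) = ρ e c := by
    intro c e
    simpa [conjTranspose_apply] using congrFun (congrFun hρ.1 e) c
  rcases eq_or_ne a b with rfl | hab
  · have him : (ρ a a).im = 0 := Complex.conj_eq_iff_im.mp (herm a a)
    rw [Complex.norm_def, Complex.normSq_apply, him]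
    simp only [mul_zero, add_zero, le_refl]
  set r : ℝ := ‖ρ a b‖ with hr
  rcases eq_or_ne (ρ a b) 0 with h0 | h0
  · simp only [hr, h0, norm_zero]; positivity
  have hrpos : 0 < r := by simpa [hr] using (norm_pos_iff.mpr h0)
  have hr2 : r ^ 2 = (ρ a b).re ^ 2 + (ρ a b).im ^ 2 := by
    rw [hr, Complex.sq_norm, Complex.normSq_apply]; ring
  have key : ∀ u : ℝ, 0 ≤ (ρ a a).re * (u * u) + (-(2*r^2)) * u + r^2 * (ρ b b).re := by
    intro u
    have h := hρ.re_dotProduct_nonneg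
      (Pi.single a (u : ℂ) + Pi.single b (-(starRingEnd ℂ) (ρ a b)))
    simp only [star_add, dotProduct_add, add_dotProduct, mulVec_add, mulVec_single] at h
    simp only [dotProduct, Pi.star_apply, Pi.single_apply, apply_ite, star_zero,
      ite_mul, zero_mul, Finset.sum_ite_eq', Finset.mem_univ, if_true,
      Pi.smul_apply, Matrix.col_apply, op_smul_eq_mul] at h
    rw [← herm a b] at h
    simp only [RCLike.re_to_complex, map_neg, Complex.conj_conj, RCLike.star_def, Complex.add_re, Complex.mul_re, Complex.mul_im,
      Complex.conj_re, Complex.conj_im, Complex.ofReal_re, Complex.ofReal_im,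
      Complex.neg_re, Complex.neg_im] at h
    rw [hr2]; ring_nf; ring_nf at h; linarith
  have hdisc := discrim_le_zero key
  rw [discrim] at hdisc
  have hsq : r ^ 2 ≤ (ρ a a).re * (ρ b b).re := by nlinarith [mul_pos hrpos hrpos]
  calc r ≤ Real.sqrt (r^2) := by rw [Real.sqrt_sq hrpos.le]
    _ ≤ _ := Real.sqrt_le_sqrt hsq

/-- For a density matrix `ρ` (positive semidefinite with trace 1), the expectation value
of any permutation operator on `m` copies of `ρ` has absolute value at most 1. -/
theorem abs_trace_permOp_mul_tensorPow_le_one {D : Type*} [Fintype D] [DecidableEq D]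
    (ρ : Matrix D D ℂ) (hρ : ρ.PosSemidef) (htr : ρ.trace = 1)
    (m : ℕ) (hm : 1 ≤ m) (σ : Equiv.Perm (Fin m)) :
    ‖Matrix.trace (permOp σ * tensorPow ρ m)‖ ≤ 1 := by
  classical
  set d : D → ℝ := fun a => (ρ a a).re with hd
  have hdn : ∀ a, 0 ≤ d a := fun a => diag_nonneg hρ a
  have htrace : Matrix.trace (permOp σ * tensorPow ρ m)
      = ∑ x : Fin m → D, ∏ t, ρ (x (σ⁻¹ t)) (x t) := by
    rw [Matrix.trace]
    refine Finset.sum_congr rfl fun x _ => ?_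
    rw [Matrix.diag_apply, Matrix.mul_apply]
    have hcond : ∀ y : Fin m → D, (x = y ∘ σ) ↔ (y = x ∘ ⇑σ⁻¹) := by
      intro y
      constructor
      · rintro rfl; funext t; simp
      · rintro rfl; funext t; simp
    simp only [permOp, tensorPow, Matrix.of_apply, hcond, ite_mul, one_mul, zero_mul,
      Finset.sum_ite_eq', Finset.mem_univ, if_true, Function.comp_apply]
  rw [htrace]
  have hsum : (∑ a, d a) = 1 := by
    have := congrArg Complex.re htr
    simpa [Matrix.trace, Matrix.diag, Complex.re_sum] using this
  calc ‖∑ x : Fin m → D, ∏ t, ρ (x (σ⁻¹ t)) (x t)‖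
      ≤ ∑ x : Fin m → D, ‖∏ t, ρ (x (σ⁻¹ t)) (x t)‖ :=
        norm_sum_le _ _
    _ = ∑ x : Fin m → D, ∏ t, ‖ρ (x (σ⁻¹ t)) (x t)‖ := by
        simp [norm_prod]
    _ ≤ ∑ x : Fin m → D, ∏ t, Real.sqrt (d (x (σ⁻¹ t)) * d (x t)) := by
        refine Finset.sum_le_sum fun x _ => Finset.prod_le_prod
          (fun t _ => norm_nonneg _) (fun t _ => entry_bound hρ _ _)
    _ = ∑ x : Fin m → D, ∏ t, Real.sqrt (d (x (σ⁻¹ t))) * Real.sqrt (d (x t)) := by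
        simp_rw [Real.sqrt_mul (hdn _)]
    _ = ∑ x : Fin m → D, (∏ t, Real.sqrt (d (x (σ⁻¹ t)))) * ∏ t, Real.sqrt (d (x t)) := by
        simp_rw [Finset.prod_mul_distrib]
    _ = ∑ x : Fin m → D, ∏ t, d (x t) := by
        refine Finset.sum_congr rfl fun x _ => ?_
        rw [Equiv.prod_comp σ⁻¹ (fun t => Real.sqrt (d (x t))), ← Finset.prod_mul_distrib]
        exact Finset.prod_congr rfl fun t _ => Real.mul_self_sqrt (hdn _)
    _ = (∑ a, d a) ^ m := (Fintype.sum_pow d m).symm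
    _ = 1 := by rw [hsum, one_pow]
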